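/- There is a bijection between the set of pairs (T, occupied corner of T), with T a symmetric tree-like tableau of size 2n+1, and the set of triples (T', i, ρ) where T' is a symmetric tree-like tableau of size 2n-1, i ∈ {1,...,n}, and ρ ∈ {a,b}. -/
import Mathlib


open Polynomial

/-- A tree-like tableau: a Young diagram together with a set of pointed cells,
such that the top-left cell is pointed (the root point), every non-root point
has a point above it in its column or to its left in its row but not both,
and no row or column of the diagram is empty of points. Cells are indexed by
`(row, column)` with the top-left cell `(0,0)`. -/
structure TreeLikeTableau where
  shape : YoungDiagram
  points : Finset (ℕ × ℕ)
  points_subset : points ⊆ shape.cells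
  root_mem : (0, 0) ∈ points
  point_cond : ∀ p ∈ points, p ≠ (0, 0) →
    Xor' (∃ r < p.1, (r, p.2) ∈ points) (∃ c < p.2, (p.1, c) ∈ points)
  no_empty_row : ∀ i j : ℕ, (i, j) ∈ shape.cells → ∃ c, (i, c) ∈ points
  no_empty_col : ∀ i j : ℕ, (i, j) ∈ shape.cells → ∃ r, (r, j) ∈ points

namespace TreeLikeTableau

/-- The size of a tree-like tableau is its number of points. -/
def size (T : TreeLikeTableau) : ℕ := T.points.card

/-- The occupied corners of a tree-like tableau: pointed cells whose bottom
and right edges lie on the Southeast border of the diagram. -/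
def occCorners (T : TreeLikeTableau) : Finset (ℕ × ℕ) :=
  T.points.filter (fun p => (p.1 + 1, p.2) ∉ T.shape.cells ∧ (p.1, p.2 + 1) ∉ T.shape.cells)

/-- The number of occupied corners. -/
def oc (T : TreeLikeTableau) : ℕ := T.occCorners.card

end TreeLikeTableau

/-- A tree-like tableau is symmetric if it is invariant under reflection
across its main diagonal. -/
def TreeLikeTableau.IsSymmetric (T : TreeLikeTableau) : Prop :=
  T.shape.transpose = T.shape ∧ ∀ p : ℕ × ℕ, p ∈ T.points ↔ (p.2, p.1) ∈ T.points

namespace OCB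

/-- index shift up (inserting index `j`) -/
def u (j a : ℕ) : ℕ := if a < j then a else a + 1
/-- index shift down (deleting index `j`) -/
def d (j a : ℕ) : ℕ := if a < j then a else a - 1

lemma u_ne (j a : ℕ) : u j a ≠ j := by unfold u; split_ifs <;> omega
lemma d_u (j a : ℕ) : d j (u j a) = a := by unfold u d; split_ifs <;> omega
lemma u_d {j a : ℕ} (h : a ≠ j) : u j (d j a) = a := by unfold u d; split_ifs <;> omega
lemma u_inj {j a b : ℕ} (h : u j a = u j b) : a = b := by unfold u at h; split_ifs at h <;> omega
lemma u_lt_iff {j a b : ℕ} : u j a < u j b ↔ a < b := by unfold u; split_ifs <;> omega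
lemma u_le_iff {j a b : ℕ} : u j a ≤ u j b ↔ a ≤ b := by unfold u; split_ifs <;> omega
lemma u_zero {j : ℕ} (hj : 1 ≤ j) : u j 0 = 0 := by unfold u; split_ifs <;> omega
lemma d_mono {j a b : ℕ} (h : a ≤ b) : d j a ≤ d j b := by unfold d; split_ifs <;> omega
lemma d_lt {j a b : ℕ} (ha : a ≠ j) (hb : b ≠ j) (h : a < b) : d j a < d j b := by
  unfold d; split_ifs <;> omega
lemma u_lt_j {j a : ℕ} : u j a < j ↔ a < j := by unfold u; split_ifs <;> omega
lemma u_le_j {j a : ℕ} : u j a ≤ j ↔ a < j := by unfold u; split_ifs <;> omega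

lemma mem_shape_of_mem_points (T : TreeLikeTableau) {p : ℕ × ℕ} (h : p ∈ T.points) :
    p ∈ T.shape := (T.shape.mem_cells _).mp (T.points_subset h)

lemma rows_add_cols (T : TreeLikeTableau) :
    T.shape.colLen 0 + T.shape.rowLen 0 = T.size + 1 := by
  classical
  set A : Finset (ℕ × ℕ) := T.points.filter (fun p => ¬ ∃ c < p.2, (p.1, c) ∈ T.points) with hA
  set B : Finset (ℕ × ℕ) := T.points.filter (fun p => ¬ ∃ r < p.1, (r, p.2) ∈ T.points) with hB
  have hAcard : A.card = T.shape.colLen 0 := by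
    rw [← Finset.card_range (T.shape.colLen 0)]
    apply Finset.card_bij (fun (p : ℕ × ℕ) _ => p.1)
    · intro p hp
      simp only [hA, Finset.mem_filter] at hp
      have := mem_shape_of_mem_points T hp.1
      have : (p.1, 0) ∈ T.shape := T.shape.up_left_mem le_rfl (Nat.zero_le _) this
      simpa [Finset.mem_range, ← YoungDiagram.mem_iff_lt_colLen] using this
    · intro p hp q hq hpq
      simp only [hA, Finset.mem_filter] at hp hq
      by_contra hne
      have h2 : p.2 ≠ q.2 := by
        intro h; exact hne (Prod.ext hpq h)
      rcases Nat.lt_or_ge p.2 q.2 with h | h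
      · exact hq.2 ⟨p.2, h, by rw [← hpq]; exact hp.1⟩
      · have h' : q.2 < p.2 := by omega
        exact hp.2 ⟨q.2, h', by rw [hpq]; exact hq.1⟩
    · intro i hi
      rw [Finset.mem_range, ← YoungDiagram.mem_iff_lt_colLen] at hi
      have hex : ∃ c, (i, c) ∈ T.points := T.no_empty_row i 0 ((T.shape.mem_cells _).mpr hi)
      classical
      let c0 := Nat.find hex
      refine ⟨(i, c0), ?_, rfl⟩
      simp only [hA, Finset.mem_filter]
      refine ⟨Nat.find_spec hex, ?_⟩
      rintro ⟨c, hc, hcp⟩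
      exact Nat.find_min hex hc hcp
  have hBcard : B.card = T.shape.rowLen 0 := by
    rw [← Finset.card_range (T.shape.rowLen 0)]
    apply Finset.card_bij (fun (p : ℕ × ℕ) _ => p.2)
    · intro p hp
      simp only [hB, Finset.mem_filter] at hp
      have := mem_shape_of_mem_points T hp.1
      have : (0, p.2) ∈ T.shape := T.shape.up_left_mem (Nat.zero_le _) le_rfl this
      simpa [Finset.mem_range, ← YoungDiagram.mem_iff_lt_rowLen] using this
    · intro p hp q hq hpq
      simp only [hB, Finset.mem_filter] at hp hq
      by_contra hne
      have h2 : p.1 ≠ q.1 := by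
        intro h; exact hne (Prod.ext h hpq)
      rcases Nat.lt_or_ge p.1 q.1 with h | h
      · exact hq.2 ⟨p.1, h, by rw [← hpq]; exact hp.1⟩
      · have h' : q.1 < p.1 := by omega
        exact hp.2 ⟨q.1, h', by rw [hpq]; exact hq.1⟩
    · intro i hi
      rw [Finset.mem_range, ← YoungDiagram.mem_iff_lt_rowLen] at hi
      have hex : ∃ c, (c, i) ∈ T.points := T.no_empty_col 0 i ((T.shape.mem_cells _).mpr hi)
      classical
      let c0 := Nat.find hex
      refine ⟨(c0, i), ?_, rfl⟩
      simp only [hB, Finset.mem_filter]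
      refine ⟨Nat.find_spec hex, ?_⟩
      rintro ⟨c, hc, hcp⟩
      exact Nat.find_min hex hc hcp
  have hunion : A ∪ B = T.points := by
    apply Finset.Subset.antisymm
    · intro p hp
      rcases Finset.mem_union.mp hp with h | h <;>
        · simp only [hA, hB, Finset.mem_filter] at h; exact h.1
    · intro p hp
      by_cases hp0 : p = (0, 0)
      · subst hp0
        apply Finset.mem_union_left
        simp only [hA, Finset.mem_filter]
        exact ⟨hp, by rintro ⟨c, hc, -⟩; omega⟩
      · rcases T.point_cond p hp hp0 with ⟨h1, h2⟩ | ⟨h1, h2⟩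
        · exact Finset.mem_union_left _ (by simp only [hA, Finset.mem_filter]; exact ⟨hp, h2⟩)
        · exact Finset.mem_union_right _ (by simp only [hB, Finset.mem_filter]; exact ⟨hp, h2⟩)
  have hinter : A ∩ B = {(0, 0)} := by
    apply Finset.Subset.antisymm
    · intro p hp
      simp only [Finset.mem_inter, hA, hB, Finset.mem_filter] at hp
      obtain ⟨⟨hp1, hp2⟩, -, hp3⟩ := hp
      by_contra hne
      have := T.point_cond p hp1 (by simpa using hne)
      rcases this with ⟨h1, -⟩ | ⟨h1, -⟩
      · exact hp3 h1
      · exact hp2 h1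
    · intro p hp
      simp only [Finset.mem_singleton] at hp
      subst hp
      simp only [Finset.mem_inter, hA, hB, Finset.mem_filter]
      exact ⟨⟨T.root_mem, by rintro ⟨c, hc, -⟩; omega⟩, ⟨T.root_mem, by rintro ⟨c, hc, -⟩; omega⟩⟩
  have := Finset.card_union_add_card_inter A B
  rw [hunion, hinter] at this
  simp only [Finset.card_singleton] at this
  unfold TreeLikeTableau.size
  omega

lemma sym_rowLen {T : TreeLikeTableau} (hs : T.IsSymmetric) (i : ℕ) :
    T.shape.rowLen i = T.shape.colLen i := by
  conv_rhs => rw [← YoungDiagram.rowLen_transpose, hs.1]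

lemma sym_mem_swap {T : TreeLikeTableau} (hs : T.IsSymmetric) {a b : ℕ}
    (h : (a, b) ∈ T.points) : (b, a) ∈ T.points := (hs.2 (a, b)).mp h

lemma sym_shape_swap {T : TreeLikeTableau} (hs : T.IsSymmetric) {a b : ℕ}
    (h : (a, b) ∈ T.shape) : (b, a) ∈ T.shape := by
  rw [← hs.1, YoungDiagram.mem_transpose]; exact h

lemma sym_colLen0 {T : TreeLikeTableau} (hs : T.IsSymmetric) :
    2 * T.shape.colLen 0 = T.size + 1 := by
  have := rows_add_cols T
  have h2 := sym_rowLen hs 0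
  omega

end OCB
namespace OCB

lemma d_eq_of_lt {j a : ℕ} (h : a < j) : d j a = a := by unfold d; split_ifs <;> omega
lemma d_eq_of_gt {j a : ℕ} (h : j < a) : d j a = a - 1 := by unfold d; split_ifs <;> omega
lemma le_d_succ (j a : ℕ) : a ≤ d j a + 1 := by unfold d; split_ifs <;> omega
lemma d_zero {j : ℕ} (hj : 1 ≤ j) : d j 0 = 0 := by unfold d; split_ifs <;> omega

/-! ### Insertion of a nearly empty row and column pair -/

def insCells (S : YoungDiagram) (j x : ℕ) : Finset (ℕ × ℕ) :=
  (S.cells.image fun p => (u j p.1, u j p.2)) ∪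
    ((Finset.range (x + 1)).image fun c => (j, c)) ∪
    ((Finset.range (x + 1)).image fun r => (r, j))

lemma mem_insCells {S : YoungDiagram} {j x a b : ℕ} :
    (a, b) ∈ insCells S j x ↔
      (a = j ∧ b ≤ x) ∨ (b = j ∧ a ≤ x) ∨ (a ≠ j ∧ b ≠ j ∧ (d j a, d j b) ∈ S) := by
  simp only [insCells, Finset.mem_union, Finset.mem_image, Finset.mem_range]
  constructor
  · rintro ((⟨p, hp, heq⟩ | ⟨cc, hcc, heq⟩) | ⟨rr, hrr, heq⟩)
    · rw [Prod.mk.injEq] at heq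
      refine Or.inr (Or.inr ⟨?_, ?_, ?_⟩)
      · rw [← heq.1]; exact u_ne j p.1
      · rw [← heq.2]; exact u_ne j p.2
      · rw [← heq.1, ← heq.2, d_u, d_u]
        simpa [YoungDiagram.mem_cells] using hp
    · rw [Prod.mk.injEq] at heq
      exact Or.inl ⟨heq.1.symm, by omega⟩
    · rw [Prod.mk.injEq] at heq
      exact Or.inr (Or.inl ⟨heq.2.symm, by omega⟩)
  · rintro (⟨rfl, hb⟩ | ⟨rfl, ha⟩ | ⟨ha, hb, hS⟩)
    · exact Or.inl (Or.inr ⟨b, by omega, rfl⟩)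
    · exact Or.inr ⟨a, by omega, rfl⟩
    · refine Or.inl (Or.inl ⟨(d j a, d j b), ?_, ?_⟩)
      · simpa [YoungDiagram.mem_cells] using hS
      · simp [u_d ha, u_d hb]

def insPts (P : Finset (ℕ × ℕ)) (j x : ℕ) : Finset (ℕ × ℕ) :=
  (P.image fun p => (u j p.1, u j p.2)) ∪ {(j, x), (x, j)}

lemma mem_insPts {P : Finset (ℕ × ℕ)} {j x a b : ℕ} :
    (a, b) ∈ insPts P j x ↔
      (a = j ∧ b = x) ∨ (a = x ∧ b = j) ∨ (a ≠ j ∧ b ≠ j ∧ (d j a, d j b) ∈ P) := by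
  simp only [insPts, Finset.mem_union, Finset.mem_image, Finset.mem_insert,
    Finset.mem_singleton, Prod.mk.injEq]
  constructor
  · rintro (⟨p, hp, heq⟩ | ⟨h1, h2⟩ | ⟨h1, h2⟩)
    · refine Or.inr (Or.inr ⟨?_, ?_, ?_⟩)
      · rw [← heq.1]; exact u_ne j p.1
      · rw [← heq.2]; exact u_ne j p.2
      · rw [← heq.1, ← heq.2, d_u, d_u]; exact hp
    · exact Or.inl ⟨h1, h2⟩
    · exact Or.inr (Or.inl ⟨h1, h2⟩)
  · rintro (⟨h1, h2⟩ | ⟨h1, h2⟩ | ⟨ha, hb, hP⟩)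
    · exact Or.inr (Or.inl ⟨h1, h2⟩)
    · exact Or.inr (Or.inr ⟨h1, h2⟩)
    · exact Or.inl ⟨(d j a, d j b), hP, by simp [u_d ha, u_d hb]⟩

/-- Context for inserting into a symmetric tree-like tableau of size `2n-1`
a nearly empty row/column pair indexed by `t < n`. -/
structure InsCtx (n : ℕ) where
  T : TreeLikeTableau
  t : ℕ
  hsym : T.IsSymmetric
  hsize : T.size = 2 * n - 1
  ht : t < n

namespace InsCtx

variable {n : ℕ}

def j (c : InsCtx n) : ℕ := c.T.shape.rowLen c.t
def x (c : InsCtx n) : ℕ := if c.t < c.j then c.t else c.t + 1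


lemma hrows (c : InsCtx n) (hn : 1 ≤ n) : c.T.shape.colLen 0 = n := by
  have := sym_colLen0 c.hsym
  rw [c.hsize] at this
  omega

lemma hj1 (c : InsCtx n) (hn : 1 ≤ n) : 1 ≤ c.j := by
  have h0 : (c.t, 0) ∈ c.T.shape := by
    rw [YoungDiagram.mem_iff_lt_colLen, hrows c hn]
    exact c.ht
  rw [YoungDiagram.mem_iff_lt_rowLen] at h0
  exact h0

lemma hcolt (c : InsCtx n) : c.T.shape.colLen c.t = c.j := (sym_rowLen c.hsym c.t).symm

lemma hjx (c : InsCtx n) : c.x ≠ c.j := by unfold x; split_ifs <;> omega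

lemma hux (c : InsCtx n) : u c.j c.t = c.x := by unfold u x; split_ifs <;> omega

lemma hdx (c : InsCtx n) : d c.j c.x = c.t := by unfold d x; split_ifs <;> omega

lemma hK1 (c : InsCtx n) (hn : 1 ≤ n) : (c.j - 1, c.t) ∈ c.T.shape := by
  rw [YoungDiagram.mem_iff_lt_colLen, hcolt c]
  have := hj1 c hn
  omega

lemma hK1' (c : InsCtx n) (hn : 1 ≤ n) : (c.t, c.j - 1) ∈ c.T.shape := by
  rw [YoungDiagram.mem_iff_lt_rowLen]
  have := hj1 c hn
  unfold j at *
  omega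

lemma hF3 (c : InsCtx n) : (c.j, c.t) ∉ c.T.shape := by
  rw [YoungDiagram.mem_iff_lt_colLen, hcolt c]
  omega

lemma hF3' (c : InsCtx n) : (c.t, c.j) ∉ c.T.shape := by
  rw [YoungDiagram.mem_iff_lt_rowLen]
  unfold j
  omega

lemma hK2 (c : InsCtx n) : ∀ cc, (c.j, cc) ∈ c.T.shape → cc < c.x := by
  intro cc hcc
  by_contra hge
  push_neg at hge
  unfold x at hge
  split_ifs at hge with htj
  · exact hF3 c (c.T.shape.up_left_mem le_rfl hge hcc)
  · push_neg at htj
    have h1 : (c.j, c.t + 1) ∈ c.T.shape := c.T.shape.up_left_mem le_rfl hge hcc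
    have h2 : (c.t + 1, c.j) ∈ c.T.shape := sym_shape_swap c.hsym h1
    rw [YoungDiagram.mem_iff_lt_rowLen] at h2
    have h3 := c.T.shape.rowLen_anti c.t (c.t + 1) (by omega)
    unfold j at *
    omega

lemma hK2' (c : InsCtx n) : ∀ cc, (cc, c.j) ∈ c.T.shape → cc < c.x := by
  intro cc hcc
  exact hK2 c cc (sym_shape_swap c.hsym hcc)

lemma hKd (c : InsCtx n) : ∀ b, b ≤ c.x → b ≠ c.j → d c.j b ≤ c.t := by
  intro b hb hbj
  unfold x at hb
  unfold d
  split_ifs at hb ⊢ <;> omega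

lemma ins_lower (c : InsCtx n) (hn : 1 ≤ n) : IsLowerSet (↑(insCells c.T.shape c.j c.x) : Set (ℕ × ℕ)) := by
  rintro ⟨a, b⟩ ⟨a', b'⟩ hle hmem
  simp only [Finset.coe_sort_coe, Finset.mem_coe] at hmem ⊢
  obtain ⟨h1, h2⟩ := hle
  simp only at h1 h2
  rw [mem_insCells] at hmem ⊢
  rcases hmem with ⟨haj, hb⟩ | ⟨hbj, ha⟩ | ⟨haj, hbj, hS⟩
  · subst haj
    by_cases ha' : a' = c.j
    · exact Or.inl ⟨ha', by omega⟩
    · have ha'lt : a' < c.j := by omega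
      by_cases hb' : b' = c.j
      · exact Or.inr (Or.inl ⟨hb', by omega⟩)
      · refine Or.inr (Or.inr ⟨ha', hb', ?_⟩)
        rw [d_eq_of_lt ha'lt]
        exact c.T.shape.up_left_mem (show a' ≤ c.j - 1 by omega) (hKd c b' (by omega) hb') (hK1 c hn)
  · subst hbj
    by_cases hb' : b' = c.j
    · exact Or.inr (Or.inl ⟨hb', by omega⟩)
    · have hb'lt : b' < c.j := by omega
      by_cases ha' : a' = c.j
      · exact Or.inl ⟨ha', by omega⟩
      · refine Or.inr (Or.inr ⟨ha', hb', ?_⟩)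
        rw [d_eq_of_lt hb'lt]
        exact c.T.shape.up_left_mem (hKd c a' (by omega) ha') (show b' ≤ c.j - 1 by omega) (hK1' c hn)
  · by_cases ha' : a' = c.j
    · refine Or.inl ⟨ha', ?_⟩
      have haj' : c.j < a := by omega
      have : (c.j, d c.j b) ∈ c.T.shape := by
        refine c.T.shape.up_left_mem ?_ le_rfl hS
        rw [d_eq_of_gt haj']; omega
      have := hK2 c _ this
      have := le_d_succ c.j b
      omega
    · by_cases hb' : b' = c.j
      · refine Or.inr (Or.inl ⟨hb', ?_⟩)
        have hbj' : c.j < b := by omega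
        have : (d c.j a, c.j) ∈ c.T.shape := by
          refine c.T.shape.up_left_mem le_rfl ?_ hS
          rw [d_eq_of_gt hbj']; omega
        have := hK2' c _ this
        have := le_d_succ c.j a
        omega
      · exact Or.inr (Or.inr ⟨ha', hb', c.T.shape.up_left_mem (d_mono h1) (d_mono h2) hS⟩)

end InsCtx

end OCB
namespace OCB
namespace InsCtx

variable {n : ℕ}

lemma ins_col_point (c : InsCtx n) (hn : 1 ≤ n) :
    ∃ r0 < c.j, (r0, c.t) ∈ c.T.points := by
  have h0 : (0, c.t) ∈ c.T.shape := by
    rw [YoungDiagram.mem_iff_lt_colLen, hcolt c]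
    exact hj1 c hn
  obtain ⟨r0, hr0⟩ := c.T.no_empty_col 0 c.t ((c.T.shape.mem_cells _).mpr h0)
  refine ⟨r0, ?_, hr0⟩
  have := mem_shape_of_mem_points c.T hr0
  rw [YoungDiagram.mem_iff_lt_colLen, hcolt c] at this
  exact this

lemma ins_row_point (c : InsCtx n) (hn : 1 ≤ n) :
    ∃ c0 < c.j, (c.t, c0) ∈ c.T.points := by
  obtain ⟨r0, hr0j, hr0⟩ := ins_col_point c hn
  exact ⟨r0, hr0j, sym_mem_swap c.hsym hr0⟩

lemma ins_subset (c : InsCtx n) :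
    insPts c.T.points c.j c.x ⊆ insCells c.T.shape c.j c.x := by
  rintro ⟨a, b⟩ hp
  rw [mem_insPts] at hp
  rw [mem_insCells]
  rcases hp with ⟨rfl, rfl⟩ | ⟨rfl, rfl⟩ | ⟨ha, hb, hP⟩
  · exact Or.inl ⟨rfl, le_rfl⟩
  · exact Or.inr (Or.inl ⟨rfl, le_rfl⟩)
  · exact Or.inr (Or.inr ⟨ha, hb, (c.T.shape.mem_cells _).mp (c.T.points_subset hP)⟩)

lemma ins_root (c : InsCtx n) (hn : 1 ≤ n) :
    (0, 0) ∈ insPts c.T.points c.j c.x := by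
  have hj := hj1 c hn
  rw [mem_insPts]
  refine Or.inr (Or.inr ⟨by omega, by omega, ?_⟩)
  rw [d_zero hj]
  exact c.T.root_mem

lemma ins_point_cond (c : InsCtx n) (hn : 1 ≤ n) :
    ∀ p ∈ insPts c.T.points c.j c.x, p ≠ (0, 0) →
      Xor' (∃ r < p.1, (r, p.2) ∈ insPts c.T.points c.j c.x)
        (∃ cc < p.2, (p.1, cc) ∈ insPts c.T.points c.j c.x) := by
  have hjx := hjx c
  have hj := hj1 c hn
  rintro ⟨a, b⟩ hp hp0
  rw [mem_insPts] at hp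
  simp only at hp0 ⊢
  rcases hp with ⟨rfl, rfl⟩ | ⟨rfl, rfl⟩ | ⟨ha, hb, hP⟩
  · -- the point (j, x)
    obtain ⟨r0, hr0j, hr0⟩ := ins_col_point c hn
    refine Or.inl ⟨⟨r0, hr0j, ?_⟩, ?_⟩
    · rw [mem_insPts]
      refine Or.inr (Or.inr ⟨by omega, hjx, ?_⟩)
      rw [d_eq_of_lt hr0j, hdx c]
      exact hr0
    · rintro ⟨cc, hcc, hmem⟩
      rw [mem_insPts] at hmem
      rcases hmem with ⟨-, h2⟩ | ⟨h1, -⟩ | ⟨h1, -, -⟩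
      · omega
      · exact hjx h1.symm
      · exact h1 rfl
  · -- the point (x, j)
    obtain ⟨c0, hc0j, hc0⟩ := ins_row_point c hn
    refine Or.inr ⟨⟨c0, hc0j, ?_⟩, ?_⟩
    · rw [mem_insPts]
      refine Or.inr (Or.inr ⟨hjx, by omega, ?_⟩)
      rw [d_eq_of_lt hc0j, hdx c]
      exact hc0
    · rintro ⟨r, hr, hmem⟩
      rw [mem_insPts] at hmem
      rcases hmem with ⟨-, h2⟩ | ⟨h1, -⟩ | ⟨-, h2, -⟩
      · exact hjx h2.symm
      · omega
      · exact h2 rfl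
  · -- an old point
    have hne0 : (d c.j a, d c.j b) ≠ (0, 0) := by
      intro h
      have h1 : d c.j a = 0 := congrArg Prod.fst h
      have h2 : d c.j b = 0 := congrArg Prod.snd h
      apply hp0
      have ha' : a = u c.j (d c.j a) := (u_d ha).symm
      have hb' : b = u c.j (d c.j b) := (u_d hb).symm
      rw [h1] at ha'; rw [h2] at hb'
      rw [u_zero hj] at ha' hb'
      exact Prod.ext ha' hb'
    have hXor := c.T.point_cond (d c.j a, d c.j b) hP hne0
    simp only at hXor
    have hA : (∃ r < a, (r, b) ∈ insPts c.T.points c.j c.x) ↔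
        (∃ r < d c.j a, (r, d c.j b) ∈ c.T.points) := by
      constructor
      · rintro ⟨r, hr, hmem⟩
        rw [mem_insPts] at hmem
        rcases hmem with ⟨hrj, hbx⟩ | ⟨-, h2⟩ | ⟨hrj, -, hP'⟩
        · exfalso
          have hbt : d c.j b = c.t := by rw [hbx, hdx c]
          have hmem2 := mem_shape_of_mem_points c.T hP
          rw [hbt] at hmem2
          rw [YoungDiagram.mem_iff_lt_colLen, hcolt c] at hmem2
          have : c.j < a := by omega
          rw [d_eq_of_gt this] at hmem2
          omega
        · exact absurd h2 hb
        · exact ⟨d c.j r, d_lt hrj ha hr, by rwa [← d_u c.j r] at hP' ⊢⟩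
      · rintro ⟨r, hr, hPr⟩
        refine ⟨u c.j r, ?_, ?_⟩
        · have : a = u c.j (d c.j a) := (u_d ha).symm
          rw [this]
          exact u_lt_iff.mpr hr
        · rw [mem_insPts]
          refine Or.inr (Or.inr ⟨u_ne _ _, hb, ?_⟩)
          rw [d_u]
          exact hPr
    have hB : (∃ cc < b, (a, cc) ∈ insPts c.T.points c.j c.x) ↔
        (∃ cc < d c.j b, (d c.j a, cc) ∈ c.T.points) := by
      constructor
      · rintro ⟨cc, hcc, hmem⟩
        rw [mem_insPts] at hmem
        rcases hmem with ⟨h1, -⟩ | ⟨hax, hccj⟩ | ⟨-, hccj, hP'⟩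
        · exact absurd h1 ha
        · exfalso
          have hat : d c.j a = c.t := by rw [hax, hdx c]
          have hmem2 := mem_shape_of_mem_points c.T hP
          rw [hat] at hmem2
          rw [YoungDiagram.mem_iff_lt_rowLen] at hmem2
          have hrow : c.T.shape.rowLen c.t = c.j := rfl
          have : c.j < b := by omega
          rw [d_eq_of_gt this] at hmem2
          rw [hrow] at hmem2
          omega
        · exact ⟨d c.j cc, d_lt hccj hb hcc, by rwa [← d_u c.j cc] at hP' ⊢⟩
      · rintro ⟨cc, hcc, hPc⟩
        refine ⟨u c.j cc, ?_, ?_⟩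
        · have : b = u c.j (d c.j b) := (u_d hb).symm
          rw [this]
          exact u_lt_iff.mpr hcc
        · rw [mem_insPts]
          refine Or.inr (Or.inr ⟨ha, u_ne _ _, ?_⟩)
          rw [d_u]
          exact hPc
    rw [hA, hB]
    exact hXor

lemma ins_ner (c : InsCtx n) (hn : 1 ≤ n) :
    ∀ i cc : ℕ, (i, cc) ∈ insCells c.T.shape c.j c.x →
      ∃ c', (i, c') ∈ insPts c.T.points c.j c.x := by
  intro i cc hmem
  rw [mem_insCells] at hmem
  rcases hmem with ⟨rfl, -⟩ | ⟨-, hix⟩ | ⟨hij, -, hS⟩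
  · exact ⟨c.x, mem_insPts.mpr (Or.inl ⟨rfl, rfl⟩)⟩
  · by_cases hij : i = c.j
    · exact ⟨c.x, mem_insPts.mpr (Or.inl ⟨hij, rfl⟩)⟩
    · have hdi : d c.j i ≤ c.t := hKd c i hix hij
      have hrow : (d c.j i, 0) ∈ c.T.shape := by
        rw [YoungDiagram.mem_iff_lt_rowLen]
        have h1 := c.T.shape.rowLen_anti (d c.j i) c.t hdi
        have h2 := hj1 c hn
        unfold j at h2
        omega
      obtain ⟨c0, hc0⟩ := c.T.no_empty_row (d c.j i) 0 ((c.T.shape.mem_cells _).mpr hrow)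
      refine ⟨u c.j c0, mem_insPts.mpr (Or.inr (Or.inr ⟨hij, u_ne _ _, ?_⟩))⟩
      rw [d_u]
      exact hc0
  · obtain ⟨c0, hc0⟩ := c.T.no_empty_row (d c.j i) (d c.j cc) ((c.T.shape.mem_cells _).mpr hS)
    refine ⟨u c.j c0, mem_insPts.mpr (Or.inr (Or.inr ⟨hij, u_ne _ _, ?_⟩))⟩
    rw [d_u]
    exact hc0

lemma ins_nec (c : InsCtx n) (hn : 1 ≤ n) :
    ∀ i cc : ℕ, (i, cc) ∈ insCells c.T.shape c.j c.x →
      ∃ r, (r, cc) ∈ insPts c.T.points c.j c.x := by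
  intro i cc hmem
  rw [mem_insCells] at hmem
  rcases hmem with ⟨-, hix⟩ | ⟨rfl, -⟩ | ⟨-, hccj, hS⟩
  · by_cases hccj : cc = c.j
    · exact ⟨c.x, mem_insPts.mpr (Or.inr (Or.inl ⟨rfl, hccj⟩))⟩
    · have hdc : d c.j cc ≤ c.t := hKd c cc hix hccj
      have hcol : (0, d c.j cc) ∈ c.T.shape := by
        rw [YoungDiagram.mem_iff_lt_colLen]
        have h1 := c.T.shape.colLen_anti (d c.j cc) c.t hdc
        have h2 := hj1 c hn
        rw [hcolt c] at h1
        omega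
      obtain ⟨r0, hr0⟩ := c.T.no_empty_col 0 (d c.j cc) ((c.T.shape.mem_cells _).mpr hcol)
      refine ⟨u c.j r0, mem_insPts.mpr (Or.inr (Or.inr ⟨u_ne _ _, hccj, ?_⟩))⟩
      rw [d_u]
      exact hr0
  · exact ⟨c.x, mem_insPts.mpr (Or.inr (Or.inl ⟨rfl, rfl⟩))⟩
  · obtain ⟨r0, hr0⟩ := c.T.no_empty_col (d c.j i) (d c.j cc) ((c.T.shape.mem_cells _).mpr hS)
    refine ⟨u c.j r0, mem_insPts.mpr (Or.inr (Or.inr ⟨u_ne _ _, hccj, ?_⟩))⟩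
    rw [d_u]
    exact hr0

/-- The tableau obtained by inserting a nearly empty row and column pair. -/
def insTab (c : InsCtx n) (hn : 1 ≤ n) : TreeLikeTableau where
  shape := ⟨insCells c.T.shape c.j c.x, ins_lower c hn⟩
  points := insPts c.T.points c.j c.x
  points_subset := ins_subset c
  root_mem := ins_root c hn
  point_cond := ins_point_cond c hn
  no_empty_row := ins_ner c hn
  no_empty_col := ins_nec c hn

lemma insTab_shape_cells (c : InsCtx n) (hn : 1 ≤ n) :
    (insTab c hn).shape.cells = insCells c.T.shape c.j c.x := rfl

lemma insTab_points (c : InsCtx n) (hn : 1 ≤ n) :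
    (insTab c hn).points = insPts c.T.points c.j c.x := rfl

lemma insTab_sym (c : InsCtx n) (hn : 1 ≤ n) : (insTab c hn).IsSymmetric := by
  constructor
  · apply SetLike.ext
    rintro ⟨a, b⟩
    rw [YoungDiagram.mem_transpose]
    show (b, a) ∈ (insTab c hn).shape.cells ↔ (a, b) ∈ (insTab c hn).shape.cells
    rw [insTab_shape_cells, mem_insCells, mem_insCells]
    constructor
    · rintro (h | h | ⟨h1, h2, h3⟩)
      · exact Or.inr (Or.inl h)
      · exact Or.inl h
      · exact Or.inr (Or.inr ⟨h2, h1, sym_shape_swap c.hsym h3⟩)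
    · rintro (h | h | ⟨h1, h2, h3⟩)
      · exact Or.inr (Or.inl h)
      · exact Or.inl h
      · exact Or.inr (Or.inr ⟨h2, h1, sym_shape_swap c.hsym h3⟩)
  · rintro ⟨a, b⟩
    show (a, b) ∈ insPts _ _ _ ↔ (b, a) ∈ insPts _ _ _
    rw [mem_insPts, mem_insPts]
    constructor
    · rintro (h | h | ⟨h1, h2, h3⟩)
      · exact Or.inr (Or.inl ⟨h.2, h.1⟩)
      · exact Or.inl ⟨h.2, h.1⟩
      · exact Or.inr (Or.inr ⟨h2, h1, sym_mem_swap c.hsym h3⟩)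
    · rintro (h | h | ⟨h1, h2, h3⟩)
      · exact Or.inr (Or.inl ⟨h.2, h.1⟩)
      · exact Or.inl ⟨h.2, h.1⟩
      · exact Or.inr (Or.inr ⟨h2, h1, sym_mem_swap c.hsym h3⟩)

lemma insTab_size (c : InsCtx n) (hn : 1 ≤ n) : (insTab c hn).size = 2 * n + 1 := by
  have hjx := hjx c
  unfold TreeLikeTableau.size
  rw [insTab_points]
  unfold insPts
  rw [Finset.card_union_of_disjoint]
  · rw [Finset.card_image_of_injective]
    · have h2 : ({(c.j, c.x), (c.x, c.j)} : Finset (ℕ × ℕ)).card = 2 := by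
        rw [Finset.card_insert_of_notMem, Finset.card_singleton]
        rw [Finset.mem_singleton]
        intro h
        rw [Prod.mk.injEq] at h
        exact hjx h.1.symm
      have h3 := c.hsize
      unfold TreeLikeTableau.size at h3
      omega
    · intro p q h
      rw [Prod.mk.injEq] at h
      exact Prod.ext (u_inj h.1) (u_inj h.2)
  · rw [Finset.disjoint_left]
    rintro ⟨a, b⟩ hmem hpair
    rw [Finset.mem_image] at hmem
    obtain ⟨p, -, heq⟩ := hmem
    rw [Prod.mk.injEq] at heq
    rw [Finset.mem_insert, Finset.mem_singleton, Prod.mk.injEq, Prod.mk.injEq] at hpair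
    rcases hpair with ⟨h1, -⟩ | ⟨-, h2⟩
    · exact u_ne c.j p.1 (heq.1.trans h1)
    · exact u_ne c.j p.2 (heq.2.trans h2)

/-- The occupied corner created by the insertion (on or below the diagonal). -/
def corner (c : InsCtx n) : ℕ × ℕ := (max c.j c.x, min c.j c.x)

lemma corner_lt (c : InsCtx n) : c.corner.2 < c.corner.1 := by
  have := hjx c
  simp only [corner]
  omega

lemma corner_mem (c : InsCtx n) (hn : 1 ≤ n) :
    c.corner ∈ (insTab c hn).occCorners := by
  have hjx := hjx c
  have hF3 := hF3 c
  have hF3' := hF3' c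
  have hdx := hdx c
  unfold TreeLikeTableau.occCorners
  rw [Finset.mem_filter]
  rcases Nat.lt_or_ge c.x c.j with hcase | hcase
  · have hc : c.corner = (c.j, c.x) := by simp only [corner]; congr 1 <;> omega
    rw [hc]
    refine ⟨mem_insPts.mpr (Or.inl ⟨rfl, rfl⟩), ?_, ?_⟩
    · rw [insTab_shape_cells, mem_insCells]
      rintro (⟨h1, -⟩ | ⟨h1, -⟩ | ⟨-, -, h3⟩)
      · omega
      · omega
      · rw [d_eq_of_gt (by omega : c.j < c.j + 1)] at h3
        simp only [Nat.add_sub_cancel] at h3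
        rw [hdx] at h3
        exact hF3 h3
    · rw [insTab_shape_cells, mem_insCells]
      rintro (⟨-, h2⟩ | ⟨h1, h2⟩ | ⟨h1, -, -⟩)
      · omega
      · omega
      · exact h1 rfl
  · have hlt : c.j < c.x := by omega
    have hc : c.corner = (c.x, c.j) := by simp only [corner]; congr 1 <;> omega
    rw [hc]
    refine ⟨mem_insPts.mpr (Or.inr (Or.inl ⟨rfl, rfl⟩)), ?_, ?_⟩
    · rw [insTab_shape_cells, mem_insCells]
      rintro (⟨h1, -⟩ | ⟨-, h2⟩ | ⟨-, h2, -⟩)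
      · omega
      · omega
      · exact h2 rfl
    · rw [insTab_shape_cells, mem_insCells]
      rintro (⟨h1, -⟩ | ⟨h1, -⟩ | ⟨-, -, h3⟩)
      · omega
      · omega
      · rw [d_eq_of_gt (by omega : c.j < c.j + 1)] at h3
        simp only [Nat.add_sub_cancel] at h3
        rw [hdx] at h3
        exact hF3' h3

end InsCtx
end OCB
namespace OCB

/-! ### Deletion of a nearly empty row and column pair -/

def delCells (S : YoungDiagram) (j : ℕ) : Finset (ℕ × ℕ) :=
  (S.cells.filter (fun p => p.1 ≠ j ∧ p.2 ≠ j)).image fun p => (d j p.1, d j p.2)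

lemma mem_delCells {S : YoungDiagram} {j a b : ℕ} :
    (a, b) ∈ delCells S j ↔ (u j a, u j b) ∈ S := by
  simp only [delCells, Finset.mem_image, Finset.mem_filter]
  constructor
  · rintro ⟨p, ⟨hp, h1, h2⟩, heq⟩
    rw [Prod.mk.injEq] at heq
    rw [← heq.1, ← heq.2, u_d h1, u_d h2]
    rwa [YoungDiagram.mem_cells] at hp
  · intro h
    refine ⟨(u j a, u j b), ⟨?_, u_ne _ _, u_ne _ _⟩, ?_⟩
    · rwa [YoungDiagram.mem_cells]
    · simp [d_u]

def delPts (P : Finset (ℕ × ℕ)) (j : ℕ) : Finset (ℕ × ℕ) :=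
  (P.filter (fun p => p.1 ≠ j ∧ p.2 ≠ j)).image fun p => (d j p.1, d j p.2)

lemma mem_delPts {P : Finset (ℕ × ℕ)} {j a b : ℕ} :
    (a, b) ∈ delPts P j ↔ (u j a, u j b) ∈ P := by
  simp only [delPts, Finset.mem_image, Finset.mem_filter]
  constructor
  · rintro ⟨p, ⟨hp, h1, h2⟩, heq⟩
    rw [Prod.mk.injEq] at heq
    rwa [← heq.1, ← heq.2, u_d h1, u_d h2]
  · intro h
    exact ⟨(u j a, u j b), ⟨h, u_ne _ _, u_ne _ _⟩, by simp [d_u]⟩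

lemma del_lower (S : YoungDiagram) (j : ℕ) :
    IsLowerSet (↑(delCells S j) : Set (ℕ × ℕ)) := by
  rintro ⟨a, b⟩ ⟨a', b'⟩ hle hmem
  obtain ⟨h1, h2⟩ := hle
  simp only at h1 h2
  simp only [Finset.coe_sort_coe, Finset.mem_coe] at hmem ⊢
  rw [mem_delCells] at hmem ⊢
  exact S.up_left_mem (u_le_iff.mpr h1) (u_le_iff.mpr h2) hmem

/-- Context for deleting the nearly empty row/column pair through an
occupied corner (strictly below the diagonal) of a symmetric tree-like
tableau of size `2n+1`. -/
structure DelCtx (n : ℕ) where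
  T : TreeLikeTableau
  r : ℕ
  s : ℕ
  hsym : T.IsSymmetric
  hsize : T.size = 2 * n + 1
  hlt : s < r
  hocc : (r, s) ∈ T.occCorners

namespace DelCtx

variable {n : ℕ}

lemma hpt (c : DelCtx n) : (c.r, c.s) ∈ c.T.points :=
  (Finset.mem_filter.mp c.hocc).1

lemma hnb (c : DelCtx n) : (c.r + 1, c.s) ∉ c.T.shape := by
  have := (Finset.mem_filter.mp c.hocc).2.1
  rwa [YoungDiagram.mem_cells] at this

lemma hnr (c : DelCtx n) : (c.r, c.s + 1) ∉ c.T.shape := by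
  have := (Finset.mem_filter.mp c.hocc).2.2
  rwa [YoungDiagram.mem_cells] at this

lemma hrowr (c : DelCtx n) : c.T.shape.rowLen c.r = c.s + 1 := by
  have h1 := c.hnr
  have h2 : (c.r, c.s) ∈ c.T.shape := mem_shape_of_mem_points c.T c.hpt
  rw [YoungDiagram.mem_iff_lt_rowLen] at h1 h2
  omega

lemma hcols (c : DelCtx n) : c.T.shape.colLen c.s = c.r + 1 := by
  have h1 := c.hnb
  have h2 : (c.r, c.s) ∈ c.T.shape := mem_shape_of_mem_points c.T c.hpt
  rw [YoungDiagram.mem_iff_lt_colLen] at h1 h2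
  omega

open Classical in
noncomputable def j (c : DelCtx n) : ℕ :=
  if ∃ r' < c.r, (r', c.s) ∈ c.T.points then c.r else c.s

open Classical in
noncomputable def x (c : DelCtx n) : ℕ :=
  if ∃ r' < c.r, (r', c.s) ∈ c.T.points then c.s else c.r

/-- The key properties of the nearly empty row/column pair being deleted. -/
structure Key (c : DelCtx n) : Prop where
  pt1 : (c.j, c.x) ∈ c.T.points
  pt2 : (c.x, c.j) ∈ c.T.points
  rowuniq : ∀ cc, (c.j, cc) ∈ c.T.points → cc = c.x
  coluniq : ∀ cc, (cc, c.j) ∈ c.T.points → cc = c.x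
  rowlenj : c.T.shape.rowLen c.j = c.x + 1
  collenj : c.T.shape.colLen c.j = c.x + 1
  colxle : ∀ cc, (cc, c.x) ∈ c.T.points → cc ≤ c.j
  rowxle : ∀ cc, (c.x, cc) ∈ c.T.points → cc ≤ c.j
  wit : ∃ cc, cc ≠ c.j ∧ (c.x, cc) ∈ c.T.points
  hj1 : 1 ≤ c.j
  hxj : c.x ≠ c.j
  rowlenx : c.T.shape.rowLen c.x = c.j + 1

lemma key (c : DelCtx n) : c.Key := by
  have hpt := c.hpt
  have hrowr := c.hrowr
  have hcols := c.hcols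
  have hlt := c.hlt
  have hXor := c.T.point_cond (c.r, c.s) hpt (by
    intro h
    have := congrArg Prod.fst h
    simp only at this
    omega)
  simp only at hXor
  have hrowcell : ∀ cc, (c.r, cc) ∈ c.T.points → cc ≤ c.s := by
    intro cc h
    have := mem_shape_of_mem_points c.T h
    rw [YoungDiagram.mem_iff_lt_rowLen, hrowr] at this
    omega
  have hcolcell : ∀ cc, (cc, c.s) ∈ c.T.points → cc ≤ c.r := by
    intro cc h
    have := mem_shape_of_mem_points c.T h
    rw [YoungDiagram.mem_iff_lt_colLen, hcols] at this
    omega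
  by_cases h : ∃ r' < c.r, (r', c.s) ∈ c.T.points
  · -- case A : the corner has a point above it; its row is nearly empty
    have hj : c.j = c.r := by unfold j; rw [if_pos h]
    have hx : c.x = c.s := by unfold x; rw [if_pos h]
    have hnl : ¬∃ c' < c.s, (c.r, c') ∈ c.T.points := by
      rcases hXor with ⟨-, h2⟩ | ⟨-, h2⟩
      · exact h2
      · exact absurd h h2
    constructor
    all_goals simp only [hj, hx]
    · exact hpt
    · exact sym_mem_swap c.hsym hpt
    · intro cc hcc
      have h1 := hrowcell cc hcc
      by_contra hne
      exact hnl ⟨cc, by omega, hcc⟩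
    · intro cc hcc
      have := sym_mem_swap c.hsym hcc
      have h1 := hrowcell cc this
      by_contra hne
      exact hnl ⟨cc, by omega, this⟩
    · exact hrowr
    · rw [← sym_rowLen c.hsym, hrowr]
    · exact hcolcell
    · intro cc hcc
      exact hcolcell cc (sym_mem_swap c.hsym hcc)
    · obtain ⟨r', hr', hmem⟩ := h
      exact ⟨r', by omega, sym_mem_swap c.hsym hmem⟩
    · omega
    · omega
    · rw [sym_rowLen c.hsym, hcols]
  · -- case B : the corner has a point to its left; its column is nearly empty
    have hj : c.j = c.s := by unfold j; rw [if_neg h]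
    have hx : c.x = c.r := by unfold x; rw [if_neg h]
    have hl : ∃ c' < c.s, (c.r, c') ∈ c.T.points := by
      rcases hXor with ⟨h1, -⟩ | ⟨h1, -⟩
      · exact absurd h1 h
      · exact h1
    have hs1 : 1 ≤ c.s := by
      obtain ⟨c', hc', -⟩ := hl
      omega
    constructor
    all_goals simp only [hj, hx]
    · exact sym_mem_swap c.hsym hpt
    · exact hpt
    · intro cc hcc
      have := sym_mem_swap c.hsym hcc
      have h1 := hcolcell cc this
      by_contra hne
      exact h ⟨cc, by omega, this⟩
    · intro cc hcc
      have h1 := hcolcell cc hcc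
      by_contra hne
      exact h ⟨cc, by omega, hcc⟩
    · rw [sym_rowLen c.hsym, hcols]
    · rw [hcols]
    · intro cc hcc
      exact hrowcell cc (sym_mem_swap c.hsym hcc)
    · exact hrowcell
    · obtain ⟨c', hc', hmem⟩ := hl
      exact ⟨c', by omega, hmem⟩
    · omega
    · omega
    · exact hrowr

lemma wit' (c : DelCtx n) : ∃ cc, cc ≠ c.j ∧ (cc, c.x) ∈ c.T.points := by
  obtain ⟨cc, h1, h2⟩ := (key c).wit
  exact ⟨cc, h1, sym_mem_swap c.hsym h2⟩

lemma del_subset (c : DelCtx n) :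
    delPts c.T.points c.j ⊆ delCells c.T.shape c.j := by
  rintro ⟨a, b⟩ hp
  rw [mem_delPts] at hp
  rw [mem_delCells]
  exact mem_shape_of_mem_points c.T hp

lemma u_eq_zero {j a : ℕ} (hj : 1 ≤ j) (h : u j a = 0) : a = 0 := by
  unfold u at h; split_ifs at h <;> omega

lemma del_root (c : DelCtx n) : (0, 0) ∈ delPts c.T.points c.j := by
  rw [mem_delPts, u_zero (key c).hj1]
  exact c.T.root_mem

lemma del_point_cond (c : DelCtx n) :
    ∀ p ∈ delPts c.T.points c.j, p ≠ (0, 0) →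
      Xor' (∃ r < p.1, (r, p.2) ∈ delPts c.T.points c.j)
        (∃ cc < p.2, (p.1, cc) ∈ delPts c.T.points c.j) := by
  have hK := key c
  rintro ⟨a, b⟩ hp hp0
  rw [mem_delPts] at hp
  simp only at hp0 ⊢
  have hne : (u c.j a, u c.j b) ≠ (0, 0) := by
    intro h
    have h1 : u c.j a = 0 := congrArg Prod.fst h
    have h2 : u c.j b = 0 := congrArg Prod.snd h
    exact hp0 (Prod.ext (u_eq_zero hK.hj1 h1) (u_eq_zero hK.hj1 h2))
  have hXor := c.T.point_cond (u c.j a, u c.j b) hp hne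
  simp only at hXor
  have hA : (∃ r < a, (r, b) ∈ delPts c.T.points c.j) ↔
      (∃ r < u c.j a, (r, u c.j b) ∈ c.T.points) := by
    constructor
    · rintro ⟨r, hr, hm⟩
      rw [mem_delPts] at hm
      exact ⟨u c.j r, u_lt_iff.mpr hr, hm⟩
    · rintro ⟨r, hr, hm⟩
      by_cases hrj : r = c.j
      · exfalso
        subst hrj
        have hbx : u c.j b = c.x := hK.rowuniq _ hm
        have := hK.colxle (u c.j a) (by rwa [hbx] at hp)
        omega
      · refine ⟨d c.j r, ?_, ?_⟩
        · have := d_lt hrj (u_ne c.j a) hr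
          rwa [d_u] at this
        · rw [mem_delPts, u_d hrj]
          exact hm
  have hB : (∃ cc < b, (a, cc) ∈ delPts c.T.points c.j) ↔
      (∃ cc < u c.j b, (u c.j a, cc) ∈ c.T.points) := by
    constructor
    · rintro ⟨cc, hcc, hm⟩
      rw [mem_delPts] at hm
      exact ⟨u c.j cc, u_lt_iff.mpr hcc, hm⟩
    · rintro ⟨cc, hcc, hm⟩
      by_cases hccj : cc = c.j
      · exfalso
        subst hccj
        have hax : u c.j a = c.x := hK.coluniq _ hm
        have := hK.rowxle (u c.j b) (by rwa [hax] at hp)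
        omega
      · refine ⟨d c.j cc, ?_, ?_⟩
        · have := d_lt hccj (u_ne c.j b) hcc
          rwa [d_u] at this
        · rw [mem_delPts, u_d hccj]
          exact hm
  rw [hA, hB]
  exact hXor

lemma del_ner (c : DelCtx n) :
    ∀ i cc : ℕ, (i, cc) ∈ delCells c.T.shape c.j →
      ∃ c', (i, c') ∈ delPts c.T.points c.j := by
  have hK := key c
  intro i cc hmem
  rw [mem_delCells] at hmem
  obtain ⟨c0, hc0⟩ := c.T.no_empty_row (u c.j i) (u c.j cc)
    ((c.T.shape.mem_cells _).mpr hmem)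
  by_cases hc0j : c0 = c.j
  · subst hc0j
    have hix : u c.j i = c.x := hK.coluniq _ hc0
    obtain ⟨cc', hcc'j, hcc'⟩ := hK.wit
    refine ⟨d c.j cc', ?_⟩
    rw [mem_delPts, u_d hcc'j, hix]
    exact hcc'
  · refine ⟨d c.j c0, ?_⟩
    rw [mem_delPts, u_d hc0j]
    exact hc0

lemma del_nec (c : DelCtx n) :
    ∀ i cc : ℕ, (i, cc) ∈ delCells c.T.shape c.j →
      ∃ r, (r, cc) ∈ delPts c.T.points c.j := by
  have hK := key c
  intro i cc hmem
  rw [mem_delCells] at hmem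
  obtain ⟨r0, hr0⟩ := c.T.no_empty_col (u c.j i) (u c.j cc)
    ((c.T.shape.mem_cells _).mpr hmem)
  by_cases hr0j : r0 = c.j
  · subst hr0j
    have hcx : u c.j cc = c.x := hK.rowuniq _ hr0
    obtain ⟨rr', hrr'j, hrr'⟩ := wit' c
    refine ⟨d c.j rr', ?_⟩
    rw [mem_delPts, u_d hrr'j, hcx]
    exact hrr'
  · refine ⟨d c.j r0, ?_⟩
    rw [mem_delPts, u_d hr0j]
    exact hr0

/-- The tableau obtained by deleting the nearly empty row/column pair. -/
noncomputable def delTab (c : DelCtx n) : TreeLikeTableau where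
  shape := ⟨delCells c.T.shape c.j, del_lower _ _⟩
  points := delPts c.T.points c.j
  points_subset := del_subset c
  root_mem := del_root c
  point_cond := del_point_cond c
  no_empty_row := del_ner c
  no_empty_col := del_nec c

lemma delTab_shape_cells (c : DelCtx n) :
    (delTab c).shape.cells = delCells c.T.shape c.j := rfl

lemma delTab_points (c : DelCtx n) :
    (delTab c).points = delPts c.T.points c.j := rfl

lemma delTab_sym (c : DelCtx n) : (delTab c).IsSymmetric := by
  constructor
  · apply SetLike.ext
    rintro ⟨a, b⟩
    rw [YoungDiagram.mem_transpose]
    show (b, a) ∈ (delTab c).shape.cells ↔ (a, b) ∈ (delTab c).shape.cells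
    rw [delTab_shape_cells, mem_delCells, mem_delCells]
    exact ⟨fun h => sym_shape_swap c.hsym h, fun h => sym_shape_swap c.hsym h⟩
  · rintro ⟨a, b⟩
    show (a, b) ∈ delPts _ _ ↔ (b, a) ∈ delPts _ _
    rw [mem_delPts, mem_delPts]
    exact ⟨fun h => sym_mem_swap c.hsym h, fun h => sym_mem_swap c.hsym h⟩

lemma delTab_size (c : DelCtx n) : (delTab c).size = 2 * n - 1 := by
  have hK := key c
  unfold TreeLikeTableau.size
  rw [delTab_points]
  unfold delPts
  rw [Finset.card_image_of_injOn]
  · have hfilter : c.T.points.filter (fun p => p.1 ≠ c.j ∧ p.2 ≠ c.j) =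
        c.T.points \ {(c.j, c.x), (c.x, c.j)} := by
      ext ⟨a, b⟩
      rw [Finset.mem_filter, Finset.mem_sdiff, Finset.mem_insert, Finset.mem_singleton]
      simp only [Prod.mk.injEq]
      constructor
      · rintro ⟨hm, h1, h2⟩
        exact ⟨hm, by rintro (⟨ha, -⟩ | ⟨-, hb⟩) <;> simp_all⟩
      · rintro ⟨hm, hne⟩
        push_neg at hne
        refine ⟨hm, ?_, ?_⟩
        · intro h1
          subst h1
          have := hK.rowuniq b hm
          exact hne.1 rfl this
        · intro h2
          subst h2
          have := hK.coluniq a hm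
          exact hne.2 this rfl
    rw [hfilter, Finset.card_sdiff_of_subset]
    · have hpair : ({(c.j, c.x), (c.x, c.j)} : Finset (ℕ × ℕ)).card = 2 := by
        rw [Finset.card_insert_of_notMem, Finset.card_singleton]
        rw [Finset.mem_singleton]
        intro h
        rw [Prod.mk.injEq] at h
        exact hK.hxj h.1.symm
      have h3 := c.hsize
      unfold TreeLikeTableau.size at h3
      rw [hpair, h3]
      omega
    · intro p hp
      rw [Finset.mem_insert, Finset.mem_singleton] at hp
      rcases hp with rfl | rfl
      · exact hK.pt1
      · exact hK.pt2
  · rintro ⟨a, b⟩ hp ⟨a', b'⟩ hq heq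
    rw [Finset.coe_filter, Set.mem_setOf_eq] at hp hq
    rw [Prod.mk.injEq] at heq
    have e1 : u c.j (d c.j a) = u c.j (d c.j a') := by rw [heq.1]
    have e2 : u c.j (d c.j b) = u c.j (d c.j b') := by rw [heq.2]
    rw [u_d hp.2.1, u_d hq.2.1] at e1
    rw [u_d hp.2.2, u_d hq.2.2] at e2
    exact Prod.ext e1 e2

lemma hxn (c : DelCtx n) : c.x ≤ n ∧ c.j ≤ n := by
  have hK := key c
  have hrows : c.T.shape.colLen 0 = n + 1 := by
    have := sym_colLen0 c.hsym
    rw [c.hsize] at this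
    omega
  have h1 : (c.x, 0) ∈ c.T.shape :=
    c.T.shape.up_left_mem le_rfl (Nat.zero_le _) (mem_shape_of_mem_points c.T hK.pt2)
  have h2 : (c.j, 0) ∈ c.T.shape :=
    c.T.shape.up_left_mem le_rfl (Nat.zero_le _) (mem_shape_of_mem_points c.T hK.pt1)
  rw [YoungDiagram.mem_iff_lt_colLen, hrows] at h1 h2
  omega

/-- The insertion context recovered after deletion. -/
noncomputable def toIns (c : DelCtx n) : InsCtx n where
  T := delTab c
  t := d c.j c.x
  hsym := delTab_sym c
  hsize := delTab_size c
  ht := by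
    have hK := key c
    have h := hxn c
    have hxj := hK.hxj
    unfold d
    split_ifs <;> omega

end DelCtx
end OCB
namespace OCB

lemma yd_ext {μ ν : YoungDiagram} (h : μ.cells = ν.cells) : μ = ν :=
  SetLike.ext fun z => by rw [← YoungDiagram.mem_cells, ← YoungDiagram.mem_cells, h]

lemma tlt_ext {T1 T2 : TreeLikeTableau} (h1 : T1.shape.cells = T2.shape.cells)
    (h2 : T1.points = T2.points) : T1 = T2 := by
  have hs : T1.shape = T2.shape := yd_ext h1
  cases T1; cases T2
  simp only at hs h2
  subst hs; subst h2; rfl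

lemma rowLen_eq_of {μ : YoungDiagram} {i L : ℕ} (h : ∀ cc, (i, cc) ∈ μ ↔ cc < L) :
    μ.rowLen i = L := by
  have h1 : (i, L) ∉ μ := by rw [h]; omega
  rw [YoungDiagram.mem_iff_lt_rowLen] at h1
  rcases Nat.eq_zero_or_pos L with rfl | hL
  · omega
  · have h2 : (i, L - 1) ∈ μ := (h _).mpr (by omega)
    rw [YoungDiagram.mem_iff_lt_rowLen] at h2
    omega

namespace DelCtx

variable {n : ℕ}

lemma mem_delTab_shape (c : DelCtx n) (a b : ℕ) :
    (a, b) ∈ (delTab c).shape ↔ (u c.j a, u c.j b) ∈ c.T.shape := by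
  rw [← YoungDiagram.mem_cells, delTab_shape_cells, mem_delCells]

lemma toIns_j (c : DelCtx n) : c.toIns.j = c.j := by
  have hK := key c
  show (delTab c).shape.rowLen (d c.j c.x) = c.j
  apply rowLen_eq_of
  intro cc
  rw [mem_delTab_shape, u_d hK.hxj, YoungDiagram.mem_iff_lt_rowLen, hK.rowlenx]
  constructor
  · intro hcc
    have h1 := u_ne c.j cc
    exact u_lt_j.mp (by omega)
  · intro hcc
    have := u_lt_j.mpr hcc
    omega

lemma toIns_t (c : DelCtx n) : c.toIns.t = d c.j c.x := rfl

lemma toIns_x (c : DelCtx n) : c.toIns.x = c.x := by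
  have hK := key c
  have hxj := hK.hxj
  unfold InsCtx.x
  rw [toIns_j, toIns_t]
  unfold d
  split_ifs <;> omega

lemma insDel_cells (c : DelCtx n) :
    insCells (delTab c).shape c.j c.x = c.T.shape.cells := by
  have hK := key c
  ext ⟨a, b⟩
  rw [mem_insCells, YoungDiagram.mem_cells]
  constructor
  · rintro (⟨rfl, hb⟩ | ⟨rfl, ha⟩ | ⟨ha, hb, hm⟩)
    · rw [YoungDiagram.mem_iff_lt_rowLen, hK.rowlenj]; omega
    · rw [YoungDiagram.mem_iff_lt_colLen, hK.collenj]; omega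
    · rw [mem_delTab_shape, u_d ha, u_d hb] at hm
      exact hm
  · intro hm
    by_cases ha : a = c.j
    · subst ha
      refine Or.inl ⟨rfl, ?_⟩
      rw [YoungDiagram.mem_iff_lt_rowLen, hK.rowlenj] at hm
      omega
    · by_cases hb : b = c.j
      · subst hb
        refine Or.inr (Or.inl ⟨rfl, ?_⟩)
        rw [YoungDiagram.mem_iff_lt_colLen, hK.collenj] at hm
        omega
      · refine Or.inr (Or.inr ⟨ha, hb, ?_⟩)
        rw [mem_delTab_shape, u_d ha, u_d hb]
        exact hm

lemma insDel_pts (c : DelCtx n) :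
    insPts (delTab c).points c.j c.x = c.T.points := by
  have hK := key c
  ext ⟨a, b⟩
  rw [mem_insPts]
  constructor
  · rintro (⟨rfl, rfl⟩ | ⟨rfl, rfl⟩ | ⟨ha, hb, hm⟩)
    · exact hK.pt1
    · exact hK.pt2
    · rw [delTab_points, mem_delPts, u_d ha, u_d hb] at hm
      exact hm
  · intro hm
    by_cases ha : a = c.j
    · subst ha
      exact Or.inl ⟨rfl, hK.rowuniq b hm⟩
    · by_cases hb : b = c.j
      · subst hb
        exact Or.inr (Or.inl ⟨hK.coluniq a hm, rfl⟩)
      · refine Or.inr (Or.inr ⟨ha, hb, ?_⟩)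
        rw [delTab_points, mem_delPts, u_d ha, u_d hb]
        exact hm

lemma jx_cases (c : DelCtx n) :
    (c.j = c.r ∧ c.x = c.s) ∨ (c.j = c.s ∧ c.x = c.r) := by
  unfold j x
  split_ifs with h
  · exact Or.inl ⟨rfl, rfl⟩
  · exact Or.inr ⟨rfl, rfl⟩

lemma comp1_tab (c : DelCtx n) (hn : 1 ≤ n) : InsCtx.insTab c.toIns hn = c.T := by
  apply tlt_ext
  · rw [InsCtx.insTab_shape_cells, toIns_j, toIns_x]
    exact insDel_cells c
  · rw [InsCtx.insTab_points, toIns_j, toIns_x]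
    exact insDel_pts c

lemma comp1_corner (c : DelCtx n) : c.toIns.corner = (c.r, c.s) := by
  unfold InsCtx.corner
  rw [toIns_j, toIns_x]
  have hlt := c.hlt
  rcases jx_cases c with ⟨h1, h2⟩ | ⟨h1, h2⟩ <;> rw [h1, h2] <;>
    exact Prod.ext (by omega) (by omega)

end DelCtx

namespace InsCtx

variable {n : ℕ}

/-- The deletion context recovered after insertion. -/
noncomputable def toDel (i : InsCtx n) (hn : 1 ≤ n) : DelCtx n where
  T := insTab i hn
  r := i.corner.1
  s := i.corner.2
  hsym := insTab_sym i hn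
  hsize := insTab_size i hn
  hlt := corner_lt i
  hocc := by rw [Prod.mk.eta]; exact corner_mem i hn

lemma toDel_jx (i : InsCtx n) (hn : 1 ≤ n) :
    (toDel i hn).j = i.j ∧ (toDel i hn).x = i.x := by
  have hjx := hjx i
  have hdx := hdx i
  unfold DelCtx.j DelCtx.x
  have hr : (toDel i hn).r = max i.j i.x := rfl
  have hs : (toDel i hn).s = min i.j i.x := rfl
  have hpts : (toDel i hn).T.points = insPts i.T.points i.j i.x := rfl
  rcases Nat.lt_or_ge i.x i.j with hcase | hcase
  · have hrj : (toDel i hn).r = i.j := by rw [hr]; omega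
    have hsx : (toDel i hn).s = i.x := by rw [hs]; omega
    rw [hrj, hsx]
    have hEx : ∃ r' < i.j, (r', i.x) ∈ (toDel i hn).T.points := by
      obtain ⟨r0, hr0j, hr0⟩ := ins_col_point i hn
      refine ⟨r0, hr0j, ?_⟩
      rw [hpts, mem_insPts]
      refine Or.inr (Or.inr ⟨by omega, hjx, ?_⟩)
      rw [d_eq_of_lt hr0j, hdx]
      exact hr0
    rw [if_pos hEx, if_pos hEx]
    exact ⟨rfl, rfl⟩
  · have hlt : i.j < i.x := by omega
    have hrj : (toDel i hn).r = i.x := by rw [hr]; omega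
    have hsx : (toDel i hn).s = i.j := by rw [hs]; omega
    rw [hrj, hsx]
    have hNEx : ¬∃ r' < i.x, (r', i.j) ∈ (toDel i hn).T.points := by
      rintro ⟨r', hr', hm⟩
      rw [hpts, mem_insPts] at hm
      rcases hm with ⟨-, h2⟩ | ⟨h1, -⟩ | ⟨-, h2, -⟩
      · exact hjx h2.symm
      · omega
      · exact h2 rfl
    rw [if_neg hNEx, if_neg hNEx]
    exact ⟨rfl, rfl⟩

lemma delIns_cells (i : InsCtx n) (hn : 1 ≤ n) :
    delCells (insTab i hn).shape i.j = i.T.shape.cells := by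
  ext ⟨a, b⟩
  rw [mem_delCells, YoungDiagram.mem_cells (μ := i.T.shape)]
  have hmem : ((u i.j a, u i.j b) ∈ (insTab i hn).shape) ↔
      (u i.j a, u i.j b) ∈ insCells i.T.shape i.j i.x := by
    rw [← YoungDiagram.mem_cells, insTab_shape_cells]
  rw [hmem, mem_insCells]
  constructor
  · rintro (⟨h1, -⟩ | ⟨h1, -⟩ | ⟨-, -, h3⟩)
    · exact absurd h1 (u_ne _ _)
    · exact absurd h1 (u_ne _ _)
    · rwa [d_u, d_u] at h3
  · intro hm
    exact Or.inr (Or.inr ⟨u_ne _ _, u_ne _ _, by rwa [d_u, d_u]⟩)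

lemma delIns_pts (i : InsCtx n) (hn : 1 ≤ n) :
    delPts (insTab i hn).points i.j = i.T.points := by
  ext ⟨a, b⟩
  rw [mem_delPts, insTab_points, mem_insPts]
  constructor
  · rintro (⟨h1, -⟩ | ⟨-, h2⟩ | ⟨-, -, h3⟩)
    · exact absurd h1 (u_ne _ _)
    · exact absurd h2 (u_ne _ _)
    · rwa [d_u, d_u] at h3
  · intro hm
    exact Or.inr (Or.inr ⟨u_ne _ _, u_ne _ _, by rwa [d_u, d_u]⟩)

lemma comp2_tab (i : InsCtx n) (hn : 1 ≤ n) : DelCtx.delTab (toDel i hn) = i.T := by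
  apply tlt_ext
  · rw [DelCtx.delTab_shape_cells, (toDel_jx i hn).1]
    exact delIns_cells i hn
  · rw [DelCtx.delTab_points, (toDel_jx i hn).1]
    exact delIns_pts i hn

lemma comp2_t (i : InsCtx n) (hn : 1 ≤ n) :
    d (toDel i hn).j (toDel i hn).x = i.t := by
  rw [(toDel_jx i hn).1, (toDel_jx i hn).2]
  exact hdx i

end InsCtx
end OCB
namespace OCB

lemma occ_swap {T : TreeLikeTableau} (hsym : T.IsSymmetric) {a b : ℕ}
    (h : (a, b) ∈ T.occCorners) : (b, a) ∈ T.occCorners := by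
  rw [TreeLikeTableau.occCorners, Finset.mem_filter] at h ⊢
  obtain ⟨hpt, h1, h2⟩ := h
  simp only at h1 h2 ⊢
  refine ⟨sym_mem_swap hsym hpt, ?_, ?_⟩
  · intro hm
    rw [YoungDiagram.mem_cells] at hm
    exact h2 ((T.shape.mem_cells _).mpr (sym_shape_swap hsym hm))
  · intro hm
    rw [YoungDiagram.mem_cells] at hm
    exact h1 ((T.shape.mem_cells _).mpr (sym_shape_swap hsym hm))

lemma no_diag {n : ℕ} {T : TreeLikeTableau} {r : ℕ} (hsym : T.IsSymmetric)
    (hsz : T.size = 2 * n + 1) (hn : 1 ≤ n) : (r, r) ∉ T.occCorners := by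
  intro h
  rw [TreeLikeTableau.occCorners, Finset.mem_filter] at h
  obtain ⟨hpt, hc1, hc2⟩ := h
  simp only at hc1 hc2
  rcases Nat.eq_zero_or_pos r with rfl | hr
  · have hsub : T.points ⊆ {(0, 0)} := by
      intro p hp
      have hps := mem_shape_of_mem_points T hp
      obtain ⟨a, b⟩ := p
      rw [Finset.mem_singleton]
      have ha : a = 0 := by
        by_contra hne
        have : (1, 0) ∈ T.shape :=
          T.shape.up_left_mem (by omega) (Nat.zero_le b) hps
        exact hc1 ((T.shape.mem_cells _).mpr this)
      have hb : b = 0 := by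
        by_contra hne
        have : (0, 1) ∈ T.shape :=
          T.shape.up_left_mem (Nat.zero_le a) (by omega) hps
        exact hc2 ((T.shape.mem_cells _).mpr this)
      exact Prod.ext ha hb
    have hcard := Finset.card_le_card hsub
    rw [Finset.card_singleton] at hcard
    unfold TreeLikeTableau.size at hsz
    omega
  · have hXor := T.point_cond (r, r) hpt (by
      intro hh
      have := congrArg Prod.fst hh
      simp only at this
      omega)
    simp only at hXor
    rcases hXor with ⟨⟨w, hw, hm⟩, h2⟩ | ⟨⟨w, hw, hm⟩, h2⟩
    · exact h2 ⟨w, hw, sym_mem_swap hsym hm⟩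
    · exact h2 ⟨w, hw, sym_mem_swap hsym hm⟩

lemma DelCtx.ctx_ext {n : ℕ} {c1 c2 : DelCtx n} (hT : c1.T = c2.T)
    (hr : c1.r = c2.r) (hs : c1.s = c2.s) : c1 = c2 := by
  cases c1; cases c2
  simp only at hT hr hs
  subst hT; subst hr; subst hs; rfl

lemma InsCtx.ctx_ext {n : ℕ} {c1 c2 : InsCtx n} (hT : c1.T = c2.T)
    (ht : c1.t = c2.t) : c1 = c2 := by
  cases c1; cases c2
  simp only at hT ht
  subst hT; subst ht; rfl

variable (n : ℕ)

abbrev A := {x : TreeLikeTableau × (ℕ × ℕ) //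
  x.1.size = 2 * n + 1 ∧ x.1.IsSymmetric ∧ x.2 ∈ x.1.occCorners}

abbrev B := {y : TreeLikeTableau × ℕ × Bool //
  y.1.size = 2 * n - 1 ∧ y.1.IsSymmetric ∧ y.2.1 ∈ Finset.Icc 1 n}

noncomputable def mkDel (x : A n) (h : x.1.2.2 < x.1.2.1) : DelCtx n :=
  ⟨x.1.1, x.1.2.1, x.1.2.2, x.2.2.1, x.2.1, h, by rw [Prod.mk.eta]; exact x.2.2.2⟩

noncomputable def mkDel' (hn : 1 ≤ n) (x : A n) (h : ¬ x.1.2.2 < x.1.2.1) : DelCtx n :=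
  ⟨x.1.1, x.1.2.2, x.1.2.1, x.2.2.1, x.2.1, by
      have hne : x.1.2.1 ≠ x.1.2.2 := by
        intro he
        apply no_diag (n := n) (r := x.1.2.1) x.2.2.1 x.2.1 hn
        have := x.2.2.2
        rw [← Prod.mk.eta (p := x.1.2), ← he] at this
        exact this
      omega,
    occ_swap x.2.2.1 (by rw [Prod.mk.eta]; exact x.2.2.2)⟩

def mkIns (y : B n) : InsCtx n :=
  ⟨y.1.1, y.1.2.1 - 1, y.2.2.1, y.2.1, by
    have := y.2.2.2
    rw [Finset.mem_Icc] at this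
    omega⟩

noncomputable def fwd (hn : 1 ≤ n) (x : A n) : B n :=
  if h : x.1.2.2 < x.1.2.1 then
    ⟨(DelCtx.delTab (mkDel n x h), (mkDel n x h).toIns.t + 1, false),
      DelCtx.delTab_size _, DelCtx.delTab_sym _, by
        show (mkDel n x h).toIns.t + 1 ∈ Finset.Icc 1 n
        rw [Finset.mem_Icc]
        have := (mkDel n x h).toIns.ht
        omega⟩
  else
    ⟨(DelCtx.delTab (mkDel' n hn x h), (mkDel' n hn x h).toIns.t + 1, true),
      DelCtx.delTab_size _, DelCtx.delTab_sym _, by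
        show (mkDel' n hn x h).toIns.t + 1 ∈ Finset.Icc 1 n
        rw [Finset.mem_Icc]
        have := (mkDel' n hn x h).toIns.ht
        omega⟩

noncomputable def bwd (hn : 1 ≤ n) (y : B n) : A n :=
  ⟨(InsCtx.insTab (mkIns n y) hn,
      if y.1.2.2 then ((mkIns n y).corner.2, (mkIns n y).corner.1) else (mkIns n y).corner),
    InsCtx.insTab_size _ hn, InsCtx.insTab_sym _ hn, by
      rcases hb : y.1.2.2 with _ | _
      · simp only [hb, if_neg Bool.false_ne_true]
        exact InsCtx.corner_mem _ hn
      · simp only [hb, if_pos rfl]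
        rw [← Prod.mk.eta (p := (mkIns n y).corner)] at *
        exact occ_swap (InsCtx.insTab_sym _ hn) (InsCtx.corner_mem _ hn)⟩

lemma left_inv (hn : 1 ≤ n) (x : A n) : bwd n hn (fwd n hn x) = x := by
  apply Subtype.ext
  by_cases h : x.1.2.2 < x.1.2.1
  · set c : DelCtx n := mkDel n x h with hc
    have h1 : (fwd n hn x).1 = (DelCtx.delTab c, c.toIns.t + 1, false) := by
      unfold fwd; rw [dif_pos h]
    have h2 : mkIns n (fwd n hn x) = c.toIns :=
      InsCtx.ctx_ext (by show (↑(fwd n hn x) : TreeLikeTableau × ℕ × Bool).1 = c.toIns.T; rw [h1]; rfl)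
        (by show ((fwd n hn x) : TreeLikeTableau × ℕ × Bool).2.1 - 1 = c.toIns.t; rw [h1]; rfl)
    unfold bwd
    simp only [h2, h1]
    rw [if_neg (by decide : ¬ (false = true))]
    rw [DelCtx.comp1_tab c hn, DelCtx.comp1_corner c]
    show (x.1.1, (x.1.2.1, x.1.2.2)) = x.1
    simp only [Prod.mk.eta]
  · set c : DelCtx n := mkDel' n hn x h with hc
    have h1 : (fwd n hn x).1 = (DelCtx.delTab c, c.toIns.t + 1, true) := by
      unfold fwd; rw [dif_neg h]
    have h2 : mkIns n (fwd n hn x) = c.toIns :=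
      InsCtx.ctx_ext (by show (↑(fwd n hn x) : TreeLikeTableau × ℕ × Bool).1 = c.toIns.T; rw [h1]; rfl)
        (by show ((fwd n hn x) : TreeLikeTableau × ℕ × Bool).2.1 - 1 = c.toIns.t; rw [h1]; rfl)
    unfold bwd
    simp only [h2, h1]
    rw [if_pos trivial]
    rw [DelCtx.comp1_tab c hn, DelCtx.comp1_corner c]
    show (x.1.1, (x.1.2.1, x.1.2.2)) = x.1
    simp only [Prod.mk.eta]

lemma right_inv (hn : 1 ≤ n) (y : B n) : fwd n hn (bwd n hn y) = y := by
  apply Subtype.ext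
  have hiy : y.1.2.1 = (mkIns n y).t + 1 := by
    have := y.2.2.2
    rw [Finset.mem_Icc] at this
    show y.1.2.1 = y.1.2.1 - 1 + 1
    omega
  have hclt := InsCtx.corner_lt (mkIns n y)
  have hval : (bwd n hn y).1 = ((mkIns n y).insTab hn,
      if (↑y : TreeLikeTableau × ℕ × Bool).2.2 = true
      then ((mkIns n y).corner.2, (mkIns n y).corner.1) else (mkIns n y).corner) := rfl
  rcases hb : (↑y : TreeLikeTableau × ℕ × Bool).2.2 with _ | _
  · have h1 : (bwd n hn y).1 = ((mkIns n y).insTab hn, (mkIns n y).corner) := by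
      rw [hval, hb]
      rw [if_neg (by decide : ¬ (false = true))]
    have h : (bwd n hn y).1.2.2 < (bwd n hn y).1.2.1 := by
      rw [h1]; exact hclt
    have h3 : (fwd n hn (bwd n hn y)).1 =
        (DelCtx.delTab (mkDel n (bwd n hn y) h), (mkDel n (bwd n hn y) h).toIns.t + 1,
          false) := by
      unfold fwd; rw [dif_pos h]
    have h4 : mkDel n (bwd n hn y) h = (mkIns n y).toDel hn :=
      DelCtx.ctx_ext
        (by show (↑(bwd n hn y) : TreeLikeTableau × ℕ × ℕ).1 = ((mkIns n y).toDel hn).T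
            rw [h1]; rfl)
        (by show (↑(bwd n hn y) : TreeLikeTableau × ℕ × ℕ).2.1 = ((mkIns n y).toDel hn).r
            rw [h1]; rfl)
        (by show (↑(bwd n hn y) : TreeLikeTableau × ℕ × ℕ).2.2 = ((mkIns n y).toDel hn).s
            rw [h1]; rfl)
    rw [h3, h4]
    show (DelCtx.delTab ((mkIns n y).toDel hn),
      d ((mkIns n y).toDel hn).j ((mkIns n y).toDel hn).x + 1, false) = y.1
    rw [InsCtx.comp2_tab (mkIns n y) hn, InsCtx.comp2_t (mkIns n y) hn]
    show (y.1.1, (mkIns n y).t + 1, false) = y.1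
    rw [← hiy, ← hb]
  · have h1 : (bwd n hn y).1 = ((mkIns n y).insTab hn,
        ((mkIns n y).corner.2, (mkIns n y).corner.1)) := by
      rw [hval, hb]
      rw [if_pos rfl]
    have h : ¬ (bwd n hn y).1.2.2 < (bwd n hn y).1.2.1 := by
      rw [h1]
      show ¬ (mkIns n y).corner.1 < (mkIns n y).corner.2
      omega
    have h3 : (fwd n hn (bwd n hn y)).1 =
        (DelCtx.delTab (mkDel' n hn (bwd n hn y) h),
          (mkDel' n hn (bwd n hn y) h).toIns.t + 1, true) := by
      unfold fwd; rw [dif_neg h]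
    have h4 : mkDel' n hn (bwd n hn y) h = (mkIns n y).toDel hn :=
      DelCtx.ctx_ext
        (by show (↑(bwd n hn y) : TreeLikeTableau × ℕ × ℕ).1 = ((mkIns n y).toDel hn).T
            rw [h1]; rfl)
        (by show (↑(bwd n hn y) : TreeLikeTableau × ℕ × ℕ).2.2 = ((mkIns n y).toDel hn).r
            rw [h1]; rfl)
        (by show (↑(bwd n hn y) : TreeLikeTableau × ℕ × ℕ).2.1 = ((mkIns n y).toDel hn).s
            rw [h1]; rfl)
    rw [h3, h4]
    show (DelCtx.delTab ((mkIns n y).toDel hn),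
      d ((mkIns n y).toDel hn).j ((mkIns n y).toDel hn).x + 1, true) = y.1
    rw [InsCtx.comp2_tab (mkIns n y) hn, InsCtx.comp2_t (mkIns n y) hn]
    show (y.1.1, (mkIns n y).t + 1, true) = y.1
    rw [← hiy, ← hb]

end OCB

/-- There is a bijection between pairs `(T, occupied corner of T)` with `T` a
symmetric tree-like tableau of size `2n+1`, and triples `(T', i, ρ)` with `T'`
a symmetric tree-like tableau of size `2n-1`, `i ∈ {1,…,n}` and `ρ ∈ {a, b}`
(realized as `Bool`). -/
theorem occupied_corners_bijection_symmetric (n : ℕ) (hn : 1 ≤ n) :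
    Nonempty
      ({x : TreeLikeTableau × (ℕ × ℕ) //
          x.1.size = 2 * n + 1 ∧ x.1.IsSymmetric ∧ x.2 ∈ x.1.occCorners} ≃
       {y : TreeLikeTableau × ℕ × Bool //
          y.1.size = 2 * n - 1 ∧ y.1.IsSymmetric ∧ y.2.1 ∈ Finset.Icc 1 n}) :=
  ⟨⟨OCB.fwd n hn, OCB.bwd n hn, OCB.left_inv n hn, OCB.right_inv n hn⟩⟩
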